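/- For any fixed β > 0 and every u ∈ dom J, the limit lim_{λ↓0} Ě_{β+λ}[Ju] equals Ě_β[Ju]; that is, the approximating trace forms are consistent: the trace of E_β constructed via the shifted approximation agrees with Ě_β itself. -/

import Mathlib

open Filter Topology RealInnerProductSpace

/-- consistency: For fixed `β > 0` and every `u ∈ dom J`,
`lim_{lam ↓ 0} Ě_{β+lam}[J u] = Ě_β[J u]`, where
`Ě_lam[J u] = inf { E_lam[v] : v ∈ dom J, J v = J u }` and `E_lam = E + lam‖·‖²`. -/
theorem stmt4 {D Haux : Type*} [NormedAddCommGroup D] [InnerProductSpace ℝ D] [CompleteSpace D]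
    [NormedAddCommGroup Haux] [InnerProductSpace ℝ Haux]
    (E : D →ₗ[ℝ] D →ₗ[ℝ] ℝ)
    (hsymm : ∀ u v : D, E u v = E v u) (hpos : ∀ u : D, 0 ≤ E u u)
    (hEclosed : ∀ u : ℕ → D, (∀ ε > (0 : ℝ), ∃ N, ∀ m ≥ N, ∀ n ≥ N,
        E (u m - u n) (u m - u n) + ‖u m - u n‖ ^ 2 < ε) →
        ∃ x : D, Tendsto (fun n => E (u n - x) (u n - x) + ‖u n - x‖ ^ 2) atTop (𝓝 0))
    (domJ : Submodule ℝ D) (J : domJ →ₗ[ℝ] Haux)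
    (hrange : DenseRange J)
    (hJclosed : ∀ (w : ℕ → domJ) (x : D) (y : Haux),
        Tendsto (fun n => E ((w n : D) - x) ((w n : D) - x) + ‖(w n : D) - x‖ ^ 2) atTop (𝓝 0) →
        Tendsto (fun n => J (w n)) atTop (𝓝 y) →
        ∃ hx : x ∈ domJ, J ⟨x, hx⟩ = y)
    (beta : ℝ) (hbeta : 0 < beta) (u : domJ) :
    Tendsto
      (fun lam : ℝ =>
        sInf {r : ℝ | ∃ v : domJ, J v = J u ∧
          r = E (v : D) (v : D) + (beta + lam) * ‖(v : D)‖ ^ 2})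
      (𝓝[>] (0 : ℝ))
      (𝓝 (sInf {r : ℝ | ∃ v : domJ, J v = J u ∧
          r = E (v : D) (v : D) + beta * ‖(v : D)‖ ^ 2})) := by
 classical
  set T : Set ℝ := {r : ℝ | ∃ v : domJ, J v = J u ∧
      r = E (v : D) (v : D) + beta * ‖(v : D)‖ ^ 2} with hT
  have hTne : T.Nonempty := ⟨_, u, rfl, rfl⟩
  have hTbdd : BddBelow T := by
    refine ⟨0, ?_⟩
    rintro r ⟨v, -, rfl⟩
    have h1 : (0:ℝ) ≤ ‖(v : D)‖ ^ 2 := sq_nonneg _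
    nlinarith [hpos (v : D)]
  set I₀ : ℝ := sInf T with hI₀
  rw [Metric.tendsto_nhdsWithin_nhds]
  intro ε hε
  obtain ⟨r, ⟨v₀, hv₀, rfl⟩, hrlt⟩ :=
    exists_lt_of_csInf_lt hTne (lt_add_of_pos_right I₀ (by linarith : (0:ℝ) < ε/2))
  refine ⟨(ε/2) / (‖(v₀ : D)‖ ^ 2 + 1), by positivity, ?_⟩
  intro lam hlam hdist
  have hlam0 : 0 < lam := hlam
  have hdist' : lam < (ε/2) / (‖(v₀ : D)‖ ^ 2 + 1) := by
    rwa [Real.dist_eq, sub_zero, abs_of_pos hlam0] at hdist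
  -- lower bound
  have hlow : I₀ ≤ sInf {r : ℝ | ∃ v : domJ, J v = J u ∧
      r = E (v : D) (v : D) + (beta + lam) * ‖(v : D)‖ ^ 2} := by
    refine le_csInf ⟨_, u, rfl, rfl⟩ ?_
    rintro r ⟨v, hv, rfl⟩
    have h1 : I₀ ≤ E (v : D) (v : D) + beta * ‖(v : D)‖ ^ 2 :=
      csInf_le hTbdd ⟨v, hv, rfl⟩
    nlinarith [sq_nonneg ‖(v : D)‖]
  -- upper bound
  have hup : sInf {r : ℝ | ∃ v : domJ, J v = J u ∧
      r = E (v : D) (v : D) + (beta + lam) * ‖(v : D)‖ ^ 2}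
      ≤ E (v₀ : D) (v₀ : D) + (beta + lam) * ‖(v₀ : D)‖ ^ 2 := by
    refine csInf_le ⟨I₀, ?_⟩ ⟨v₀, hv₀, rfl⟩
    rintro r ⟨v, hv, rfl⟩
    have h1 : I₀ ≤ E (v : D) (v : D) + beta * ‖(v : D)‖ ^ 2 :=
      csInf_le hTbdd ⟨v, hv, rfl⟩
    nlinarith [sq_nonneg ‖(v : D)‖]
  have hkey : lam * ‖(v₀ : D)‖ ^ 2 < ε/2 := by
    have h2 : (0:ℝ) < ‖(v₀ : D)‖ ^ 2 + 1 := by positivity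
    calc lam * ‖(v₀ : D)‖ ^ 2 ≤ lam * (‖(v₀ : D)‖ ^ 2 + 1) := by nlinarith
      _ < (ε/2) / (‖(v₀ : D)‖ ^ 2 + 1) * (‖(v₀ : D)‖ ^ 2 + 1) := by
          exact mul_lt_mul_of_pos_right hdist' h2
      _ = ε/2 := by field_simp
  rw [Real.dist_eq, abs_lt]
  constructor <;> nlinarith
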